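/- Let A = [[1, 1], [0, 1]] and B = [[1, 0], [1, 1]] in SL(2, ℤ). The monoid homomorphism from the free monoid on two generators to SL(2, ℤ) sending one generator to A and the other to B is injective; equivalently, if two finite words in the letters A and B give the same matrix product in SL(2, ℤ), then the words are equal. Hence the submonoid of SL(2, ℤ) consisting of matrices with non-negative entries is a free monoid on the two generators A and B. -/

import Mathlib

/-- The matrix `A = [[1,1],[0,1]]` as an element of `SL(2, ℤ)`. -/
def slA : Matrix.SpecialLinearGroup (Fin 2) ℤ :=
  ⟨!![1, 1; 0, 1], by simp [Matrix.det_fin_two_of]⟩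

/-- The matrix `B = [[1,0],[1,1]]` as an element of `SL(2, ℤ)`. -/
def slB : Matrix.SpecialLinearGroup (Fin 2) ℤ :=
  ⟨!![1, 0; 1, 1], by simp [Matrix.det_fin_two_of]⟩

namespace SL2AB

abbrev SL2 := Matrix.SpecialLinearGroup (Fin 2) ℤ

def f : FreeMonoid (Fin 2) →* SL2 :=
  FreeMonoid.lift (![slA, slB] : Fin 2 → Matrix.SpecialLinearGroup (Fin 2) ℤ)

def Pos (X : SL2) : Prop := ∀ i j, 0 ≤ (X : Matrix (Fin 2) (Fin 2) ℤ) i j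

lemma detX (X : SL2) : X.1 0 0 * X.1 1 1 - X.1 0 1 * X.1 1 0 = 1 := by
  have h := X.2
  rwa [Matrix.det_fin_two] at h

lemma coeA : (slA : Matrix (Fin 2) (Fin 2) ℤ) = !![1, 1; 0, 1] := rfl
lemma coeB : (slB : Matrix (Fin 2) (Fin 2) ℤ) = !![1, 0; 1, 1] := rfl

lemma mulA (X : SL2) :
    ((slA * X : SL2) : Matrix (Fin 2) (Fin 2) ℤ)
      = !![X.1 0 0 + X.1 1 0, X.1 0 1 + X.1 1 1; X.1 1 0, X.1 1 1] := by
  rw [Matrix.SpecialLinearGroup.coe_mul, coeA, Matrix.eta_fin_two (X : Matrix (Fin 2) (Fin 2) ℤ),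
    Matrix.mul_fin_two]
  norm_num

lemma mulB (X : SL2) :
    ((slB * X : SL2) : Matrix (Fin 2) (Fin 2) ℤ)
      = !![X.1 0 0, X.1 0 1; X.1 0 0 + X.1 1 0, X.1 0 1 + X.1 1 1] := by
  rw [Matrix.SpecialLinearGroup.coe_mul, coeB, Matrix.eta_fin_two (X : Matrix (Fin 2) (Fin 2) ℤ),
    Matrix.mul_fin_two]
  norm_num

lemma Pos.mul {X Y : SL2} (hX : Pos X) (hY : Pos Y) : Pos (X * Y) := by
  intro i j
  rw [Matrix.SpecialLinearGroup.coe_mul, Matrix.mul_apply]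
  exact Finset.sum_nonneg fun k _ => mul_nonneg (hX i k) (hY k j)

lemma pos_gen (i : Fin 2) : Pos (![slA, slB] i) := by
  have hi : i = 0 ∨ i = 1 := by omega
  rcases hi with rfl | rfl <;> intro a b <;> fin_cases a <;> fin_cases b <;> simp [slA, slB]

lemma pos_f (w : FreeMonoid (Fin 2)) : Pos (f w) := by
  induction w using FreeMonoid.recOn with
  | one =>
    intro i j
    simp only [map_one, Matrix.SpecialLinearGroup.coe_one, Matrix.one_apply]
    split <;> norm_num
  | of_mul x xs hxs =>
    rw [map_mul]
    have h1 : f (FreeMonoid.of x) = ![slA, slB] x := by simp [f]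
    rw [h1]
    exact Pos.mul (pos_gen x) hxs

lemma f_of (i : Fin 2) (w : FreeMonoid (Fin 2)) :
    f (FreeMonoid.of i * w) = ![slA, slB] i * f w := by
  rw [map_mul]
  congr 1

/-- No nonempty word maps to `1`. -/
lemma f_ne_one (i : Fin 2) (w : FreeMonoid (Fin 2)) : f (FreeMonoid.of i * w) ≠ 1 := by
  intro h
  rw [f_of] at h
  have hw := pos_f w
  set P := f w with hP
  have hi : i = 0 ∨ i = 1 := by omega
  rcases hi with rfl | rfl
  · rw [show (![slA, slB] 0 = slA) from rfl] at h
    have hc : ((slA * P : SL2) : Matrix (Fin 2) (Fin 2) ℤ)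
        = (1 : Matrix (Fin 2) (Fin 2) ℤ) := by rw [h]; simp
    rw [mulA, Matrix.one_fin_two] at hc
    have h01 : P.1 0 1 + P.1 1 1 = 0 := by
      have := congrFun (congrFun hc 0) 1; simpa using this
    have h11 : P.1 1 1 = 1 := by
      have := congrFun (congrFun hc 1) 1; simpa using this
    have := hw 0 1
    omega
  · rw [show (![slA, slB] 1 = slB) from rfl] at h
    have hc : ((slB * P : SL2) : Matrix (Fin 2) (Fin 2) ℤ)
        = (1 : Matrix (Fin 2) (Fin 2) ℤ) := by rw [h]; simp
    rw [mulB, Matrix.one_fin_two] at hc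
    have h10 : P.1 0 0 + P.1 1 0 = 0 := by
      have := congrFun (congrFun hc 1) 0; simpa using this
    have h00 : P.1 0 0 = 1 := by
      have := congrFun (congrFun hc 0) 0; simpa using this
    have := hw 1 0
    omega

/-- Two nonempty words with equal image have equal first letters. -/
lemma head_eq {i j : Fin 2} {w v : FreeMonoid (Fin 2)}
    (h : f (FreeMonoid.of i * w) = f (FreeMonoid.of j * v)) : i = j := by
  by_contra hij
  have key : ∀ (w v : FreeMonoid (Fin 2)), f (FreeMonoid.of 0 * w) ≠ f (FreeMonoid.of 1 * v) := by
    intro w v h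
    rw [f_of, f_of] at h
    have hw := pos_f w
    have hv := pos_f v
    set P := f w
    set Q := f v
    rw [show (![slA, slB] 0 = slA) from rfl, show (![slA, slB] 1 = slB) from rfl] at h
    have hc : ((slA * P : SL2) : Matrix (Fin 2) (Fin 2) ℤ)
        = ((slB * Q : SL2) : Matrix (Fin 2) (Fin 2) ℤ) := by rw [h]
    rw [mulA, mulB] at hc
    have e00 : P.1 0 0 + P.1 1 0 = Q.1 0 0 := by
      have := congrFun (congrFun hc 0) 0; simpa using this
    have e01 : P.1 0 1 + P.1 1 1 = Q.1 0 1 := by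
      have := congrFun (congrFun hc 0) 1; simpa using this
    have e10 : P.1 1 0 = Q.1 0 0 + Q.1 1 0 := by
      have := congrFun (congrFun hc 1) 0; simpa using this
    have e11 : P.1 1 1 = Q.1 0 1 + Q.1 1 1 := by
      have := congrFun (congrFun hc 1) 1; simpa using this
    have hdet0 := detX (slA * P)
    rw [mulA] at hdet0
    have hdet : (P.1 0 0 + P.1 1 0) * P.1 1 1 - (P.1 0 1 + P.1 1 1) * P.1 1 0 = 1 := hdet0
    have hP00 := hw 0 0; have hP01 := hw 0 1; have hP10 := hw 1 0; have hP11 := hw 1 1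
    have hQ00 := hv 0 0; have hQ01 := hv 0 1; have hQ10 := hv 1 0; have hQ11 := hv 1 1
    have hP00z : P.1 0 0 = 0 := by omega
    have hP01z : P.1 0 1 = 0 := by omega
    rw [hP00z, hP01z] at hdet
    ring_nf at hdet
    omega
  have hi : i = 0 ∨ i = 1 := by omega
  have hj : j = 0 ∨ j = 1 := by omega
  rcases hi with rfl | rfl <;> rcases hj with rfl | rfl
  · exact hij rfl
  · exact key w v h
  · exact key v w h.symm
  · exact hij rfl

lemma f_injective : Function.Injective f := by
  intro w
  induction w using FreeMonoid.recOn with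
  | one =>
    intro v hv
    induction v using FreeMonoid.recOn with
    | one => rfl
    | of_mul y ys _ => exact absurd hv.symm (by rw [map_one]; exact f_ne_one y ys)
  | of_mul x xs ihx =>
    intro v hv
    induction v using FreeMonoid.recOn with
    | one => exact absurd hv (by rw [map_one]; exact f_ne_one x xs)
    | of_mul y ys _ =>
      have hxy : x = y := head_eq hv
      subst hxy
      rw [map_mul, map_mul] at hv
      have h2 : f xs = f ys := mul_left_cancel hv
      have h3 : xs = ys := ihx h2
      rw [h3]

lemma exists_word : ∀ (n : ℕ) (X : SL2), Pos X →
    (X.1 0 0 + X.1 0 1 + X.1 1 0 + X.1 1 1).toNat ≤ n → ∃ w, f w = X := by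
  intro n
  induction n with
  | zero =>
    intro X hX hsum
    exfalso
    have h00 := hX 0 0; have h01 := hX 0 1; have h10 := hX 1 0; have h11 := hX 1 1
    have hdet := detX X
    have hz : X.1 0 0 = 0 ∧ X.1 1 1 = 0 ∧ X.1 0 1 = 0 := by omega
    rw [hz.1, hz.2.1, hz.2.2] at hdet
    omega
  | succ n ih =>
    intro X hX hsum
    have h00 := hX 0 0; have h01 := hX 0 1; have h10 := hX 1 0; have h11 := hX 1 1
    have hdet := detX X
    by_cases hA : X.1 1 0 ≤ X.1 0 0 ∧ X.1 1 1 ≤ X.1 0 1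
    · -- X = A * X'
      have hcd : ¬(X.1 1 0 = 0 ∧ X.1 1 1 = 0) := by
        rintro ⟨h1, h2⟩; rw [h1, h2] at hdet; omega
      set X' : SL2 := ⟨!![X.1 0 0 - X.1 1 0, X.1 0 1 - X.1 1 1; X.1 1 0, X.1 1 1], by
        rw [Matrix.det_fin_two_of]; linear_combination hdet⟩ with hX'
      have hmul : slA * X' = X := by
        apply Subtype.ext
        rw [mulA]
        show _ = (X : Matrix (Fin 2) (Fin 2) ℤ)
        rw [Matrix.eta_fin_two (X : Matrix (Fin 2) (Fin 2) ℤ)]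
        have e00 : X'.1 0 0 = X.1 0 0 - X.1 1 0 := rfl
        have e01 : X'.1 0 1 = X.1 0 1 - X.1 1 1 := rfl
        have e10 : X'.1 1 0 = X.1 1 0 := rfl
        have e11 : X'.1 1 1 = X.1 1 1 := rfl
        rw [e00, e01, e10, e11]
        congr 1 <;> ring_nf
      have hPos' : Pos X' := by
        intro i j
        have hi : i = 0 ∨ i = 1 := by omega
        have hj : j = 0 ∨ j = 1 := by omega
        rcases hi with rfl | rfl <;> rcases hj with rfl | rfl
        · show (0 : ℤ) ≤ X.1 0 0 - X.1 1 0; omega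
        · show (0 : ℤ) ≤ X.1 0 1 - X.1 1 1; omega
        · show (0 : ℤ) ≤ X.1 1 0; omega
        · show (0 : ℤ) ≤ X.1 1 1; omega
      have hsum' : (X'.1 0 0 + X'.1 0 1 + X'.1 1 0 + X'.1 1 1).toNat ≤ n := by
        show ((X.1 0 0 - X.1 1 0) + (X.1 0 1 - X.1 1 1) + X.1 1 0 + X.1 1 1).toNat ≤ n
        omega
      obtain ⟨w, hw⟩ := ih X' hPos' hsum'
      exact ⟨FreeMonoid.of 0 * w, by rw [f_of, hw, show (![slA, slB] 0 = slA) from rfl, hmul]⟩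
    · by_cases hB : X.1 0 0 ≤ X.1 1 0 ∧ X.1 0 1 ≤ X.1 1 1
      · have hab : ¬(X.1 0 0 = 0 ∧ X.1 0 1 = 0) := by
          rintro ⟨h1, h2⟩; rw [h1, h2] at hdet; omega
        set X' : SL2 := ⟨!![X.1 0 0, X.1 0 1; X.1 1 0 - X.1 0 0, X.1 1 1 - X.1 0 1], by
          rw [Matrix.det_fin_two_of]; linear_combination hdet⟩ with hX'
        have hmul : slB * X' = X := by
          apply Subtype.ext
          rw [mulB]
          show _ = (X : Matrix (Fin 2) (Fin 2) ℤ)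
          rw [Matrix.eta_fin_two (X : Matrix (Fin 2) (Fin 2) ℤ)]
          have e00 : X'.1 0 0 = X.1 0 0 := rfl
          have e01 : X'.1 0 1 = X.1 0 1 := rfl
          have e10 : X'.1 1 0 = X.1 1 0 - X.1 0 0 := rfl
          have e11 : X'.1 1 1 = X.1 1 1 - X.1 0 1 := rfl
          rw [e00, e01, e10, e11]
          congr 1 <;> ring_nf
        have hPos' : Pos X' := by
          intro i j
          have hi : i = 0 ∨ i = 1 := by omega
          have hj : j = 0 ∨ j = 1 := by omega
          rcases hi with rfl | rfl <;> rcases hj with rfl | rfl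
          · show (0 : ℤ) ≤ X.1 0 0; omega
          · show (0 : ℤ) ≤ X.1 0 1; omega
          · show (0 : ℤ) ≤ X.1 1 0 - X.1 0 0; omega
          · show (0 : ℤ) ≤ X.1 1 1 - X.1 0 1; omega
        have hsum' : (X'.1 0 0 + X'.1 0 1 + X'.1 1 0 + X'.1 1 1).toNat ≤ n := by
          show (X.1 0 0 + X.1 0 1 + (X.1 1 0 - X.1 0 0) + (X.1 1 1 - X.1 0 1)).toNat ≤ n
          omega
        obtain ⟨w, hw⟩ := ih X' hPos' hsum'
        exact ⟨FreeMonoid.of 1 * w, by rw [f_of, hw, show (![slA, slB] 1 = slB) from rfl, hmul]⟩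
      · -- X = 1
        refine ⟨1, ?_⟩
        rw [map_one]
        symm
        apply Subtype.ext
        rcases not_and_or.mp hA with h1 | h1 <;> rcases not_and_or.mp hB with h2 | h2 <;>
          push_neg at h1 h2
        · omega
        · -- X00 < X10 and X11 < X01 : det < 0
          exfalso
          nlinarith [mul_le_mul (by omega : X.1 0 0 + 1 ≤ X.1 1 0)
            (by omega : X.1 1 1 + 1 ≤ X.1 0 1) (by omega) h10]
        · -- X01 < X11 and X10 < X00
          have key : (X.1 1 0 + 1) * (X.1 0 1 + 1) ≤ X.1 0 0 * X.1 1 1 :=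
            mul_le_mul (by omega) (by omega) (by omega) (by omega)
          have hb0 : X.1 0 1 = 0 := by nlinarith
          have hc0 : X.1 1 0 = 0 := by nlinarith
          have had : X.1 0 0 * X.1 1 1 = 1 := by rw [hb0, hc0] at hdet; linarith
          have ha1 : X.1 0 0 = 1 := Int.eq_one_of_mul_eq_one_right h00 had
          have had' : X.1 1 1 * X.1 0 0 = 1 := by rw [mul_comm]; exact had
          have hd1 : X.1 1 1 = 1 := Int.eq_one_of_mul_eq_one_right h11 had'
          rw [Matrix.eta_fin_two (X : Matrix (Fin 2) (Fin 2) ℤ), hb0, hc0, ha1, hd1]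
          simp [Matrix.one_fin_two]
        · omega

end SL2AB

/-- The monoid homomorphism from the free monoid on two generators to `SL(2, ℤ)`
sending the generators to `A = [[1,1],[0,1]]` and `B = [[1,0],[1,1]]` is injective, and its
range is exactly the submonoid of matrices with non-negative entries.  Hence that submonoid
is a free monoid on `A` and `B`. -/
theorem sl2_nonneg_free_monoid_on_AB :
    Function.Injective
        (FreeMonoid.lift (![slA, slB] : Fin 2 → Matrix.SpecialLinearGroup (Fin 2) ℤ)) ∧
    Set.range (FreeMonoid.lift (![slA, slB] : Fin 2 → Matrix.SpecialLinearGroup (Fin 2) ℤ))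
      = {X : Matrix.SpecialLinearGroup (Fin 2) ℤ |
          ∀ i j, 0 ≤ (X : Matrix (Fin 2) (Fin 2) ℤ) i j} := by
  constructor
  · exact SL2AB.f_injective
  · ext X
    constructor
    · rintro ⟨w, rfl⟩
      exact SL2AB.pos_f w
    · intro hX
      exact SL2AB.exists_word (X.1 0 0 + X.1 0 1 + X.1 1 0 + X.1 1 1).toNat X hX le_rfl
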